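/- Let H be the discrete Schrödinger operator (Hφ)(n) = φ(n+1) + φ(n−1) + V(n)φ(n) on sequences over ℤ, and suppose that for some m ∈ ℤ there are words w_k of lengths L_k → ∞ such that V restricted to [m+1, m+2L_k] equals w_k w_k (a square), and the traces of the SL(2,ℝ) transfer matrices over the blocks w_k at energy E are bounded by a constant C. Then E is not an eigenvalue of H, i.e., there is no nonzero ℓ²(ℤ) solution of Hφ = Eφ. -/

import Mathlib

/-- One-step transfer matrix `T(b) = [[E−b, −1],[1,0]]`. -/
def stepMatrix (E b : ℝ) : Matrix (Fin 2) (Fin 2) ℝ := !![E - b, -1; 1, 0]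

/-- Transfer matrix over the block `V(m+1), …, V(m+L)`:
`M = T(V(m+L))⋯T(V(m+1))`. -/
def blockMatrix (V : ℤ → ℝ) (E : ℝ) (m : ℤ) : ℕ → Matrix (Fin 2) (Fin 2) ℝ
  | 0 => 1
  | (L + 1) => stepMatrix E (V (m + L + 1)) * blockMatrix V E m L

section aux

variable (V : ℤ → ℝ) (E : ℝ) (φ : ℤ → ℝ)

/-- Solution vector. -/
def solVec (n : ℤ) : Fin 2 → ℝ := ![φ (n + 1), φ n]

lemma step_mulVec (hφ : ∀ n : ℤ, φ (n + 1) + φ (n - 1) + V n * φ n = E * φ n)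
    (n : ℤ) : (stepMatrix E (V (n + 1))).mulVec (solVec φ n) = solVec φ (n + 1) := by
  have h := hφ (n + 1)
  simp only [add_sub_cancel_right] at h
  funext i
  fin_cases i <;>
    simp [stepMatrix, solVec, Matrix.mulVec, dotProduct, Fin.sum_univ_two] <;>
    linarith

lemma block_mulVec (hφ : ∀ n : ℤ, φ (n + 1) + φ (n - 1) + V n * φ n = E * φ n)
    (m : ℤ) : ∀ L : ℕ, (blockMatrix V E m L).mulVec (solVec φ m) = solVec φ (m + L)
  | 0 => by simp [blockMatrix]
  | (L + 1) => by
    rw [blockMatrix, ← Matrix.mulVec_mulVec, block_mulVec hφ m L]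
    have := step_mulVec V E φ hφ (m + L)
    rw [show (m : ℤ) + (L + 1 : ℕ) = m + L + 1 by push_cast; ring]
    rw [show (m : ℤ) + L + 1 = (m + L) + 1 from rfl] at *
    exact this

lemma block_det (m : ℤ) : ∀ L : ℕ, (blockMatrix V E m L).det = 1
  | 0 => by simp [blockMatrix]
  | (L + 1) => by
    rw [blockMatrix, Matrix.det_mul, block_det m L]
    simp [stepMatrix, Matrix.det_fin_two]

lemma block_congr (m m' : ℤ) : ∀ L : ℕ,
    (∀ j : ℕ, 1 ≤ j → j ≤ L → V (m' + j) = V (m + j)) →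
    blockMatrix V E m' L = blockMatrix V E m L
  | 0, _ => rfl
  | (L + 1), h => by
    rw [blockMatrix, blockMatrix,
      block_congr m m' L (fun j h1 h2 => h j h1 (le_trans h2 (Nat.le_succ L)))]
    have := h (L + 1) (Nat.le_add_left 1 L) le_rfl
    push_cast at this
    rw [show m' + (L : ℤ) + 1 = m' + ((L : ℤ) + 1) by ring,
      show m + (L : ℤ) + 1 = m + ((L : ℤ) + 1) by ring, this]

lemma cayley2 (M : Matrix (Fin 2) (Fin 2) ℝ) (v : Fin 2 → ℝ) :
    (M * M).mulVec v = M.trace • M.mulVec v - M.det • v := by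
  funext i
  fin_cases i <;>
    simp [Matrix.mul_apply, Matrix.mulVec, dotProduct, Fin.sum_univ_two,
      Matrix.trace_fin_two, Matrix.det_fin_two] <;> ring

end aux

/-- Gordon's two-block criterion: if `V` has squares `w_k w_k` of lengths
`L k → ∞` starting at `m`, and the traces of the transfer matrices over the
blocks `w_k` at energy `E` are bounded, then `E` is not an eigenvalue: every
square-summable solution of the difference equation is zero. -/
theorem gordon_two_block (V : ℤ → ℝ) (E C : ℝ) (m : ℤ) (L : ℕ → ℕ)
    (hL : Filter.Tendsto L Filter.atTop Filter.atTop)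
    (hsq : ∀ k : ℕ, ∀ j : ℕ, 1 ≤ j → j ≤ L k →
      V (m + (j : ℤ) + (L k : ℤ)) = V (m + (j : ℤ)))
    (htr : ∀ k : ℕ, |(blockMatrix V E m (L k)).trace| ≤ C)
    (φ : ℤ → ℝ)
    (hφ : ∀ n : ℤ, φ (n + 1) + φ (n - 1) + V n * φ n = E * φ n)
    (hl2 : Summable fun n : ℤ => φ n ^ 2) :
    φ = 0 := by
  -- φ tends to 0 at cofinite
  have hcof : Filter.Tendsto φ Filter.cofinite (nhds 0) := by
    have h1 : Filter.Tendsto (fun n => φ n ^ 2) Filter.cofinite (nhds 0) :=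
      hl2.tendsto_cofinite_zero
    have h2 : Filter.Tendsto (fun n => Real.sqrt (φ n ^ 2)) Filter.cofinite (nhds 0) := by
      simpa [Function.comp_def] using (Real.continuous_sqrt.tendsto 0).comp h1
    rw [tendsto_zero_iff_abs_tendsto_zero]
    simpa [Real.sqrt_sq_eq_abs, Function.comp_def] using h2
  have hatTop : (Filter.atTop : Filter ℤ) ≤ Filter.cofinite := by
    rw [Int.cofinite_eq]; exact le_sup_right
  -- main identity: solVec φ m = trace • solVec φ (m + L k) - solVec φ (m + L k + L k)
  have key : ∀ k : ℕ, solVec φ m =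
      (blockMatrix V E m (L k)).trace • solVec φ (m + (L k : ℤ)) -
        solVec φ (m + (L k : ℤ) + (L k : ℤ)) := by
    intro k
    set M := blockMatrix V E m (L k) with hM
    have h1 : M.mulVec (solVec φ m) = solVec φ (m + (L k : ℤ)) :=
      block_mulVec V E φ hφ m (L k)
    have hcongr : blockMatrix V E (m + (L k : ℤ)) (L k) = M := by
      apply block_congr
      intro j h1 h2
      have := hsq k j h1 h2
      rw [show m + (L k : ℤ) + (j : ℤ) = m + (j : ℤ) + (L k : ℤ) by ring, this]
    have h2 : M.mulVec (solVec φ (m + (L k : ℤ))) = solVec φ (m + (L k : ℤ) + (L k : ℤ)) := by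
      rw [← hcongr]
      exact block_mulVec V E φ hφ (m + (L k : ℤ)) (L k)
    have h3 : (M * M).mulVec (solVec φ m) = solVec φ (m + (L k : ℤ) + (L k : ℤ)) := by
      rw [← Matrix.mulVec_mulVec, h1, h2]
    rw [cayley2, h1, block_det V E m (L k), one_smul] at h3
    rw [eq_sub_iff_add_eq, ← h3]
    ring_nf
  -- tendsto of φ along the shifted sequences
  have hseq : ∀ c : ℤ, Filter.Tendsto (fun k => φ (c + (L k : ℤ))) Filter.atTop (nhds 0) := by
    intro c
    have hc : Filter.Tendsto (fun k => c + (L k : ℤ)) Filter.atTop Filter.atTop := by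
      exact Filter.tendsto_atTop_add_const_left _ c
        (tendsto_natCast_atTop_atTop.comp hL)
    exact hcof.comp (hc.mono_right hatTop)
  have hseq2 : ∀ c : ℤ, Filter.Tendsto (fun k => φ (c + (L k : ℤ) + (L k : ℤ)))
      Filter.atTop (nhds 0) := by
    intro c
    have hc : Filter.Tendsto (fun k => c + (L k : ℤ) + (L k : ℤ)) Filter.atTop Filter.atTop := by
      have := (tendsto_natCast_atTop_atTop (R := ℤ)).comp hL
      exact Filter.Tendsto.atTop_add_atTop (Filter.tendsto_atTop_add_const_left _ c this) this
    exact hcof.comp (hc.mono_right hatTop)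
  -- deduce φ m = 0 and φ (m+1) = 0
  have hzero : ∀ c : ℤ, (∀ k : ℕ, φ c = (blockMatrix V E m (L k)).trace * φ (c + (L k : ℤ))
      - φ (c + (L k : ℤ) + (L k : ℤ))) → φ c = 0 := by
    intro c hc
    have hbound : ∀ k : ℕ, |φ c| ≤ C * |φ (c + (L k : ℤ))| + |φ (c + (L k : ℤ) + (L k : ℤ))| := by
      intro k
      rw [hc k]
      calc |(blockMatrix V E m (L k)).trace * φ (c + (L k : ℤ))
            - φ (c + (L k : ℤ) + (L k : ℤ))|
          ≤ |(blockMatrix V E m (L k)).trace * φ (c + (L k : ℤ))|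
            + |φ (c + (L k : ℤ) + (L k : ℤ))| := abs_sub _ _
        _ ≤ C * |φ (c + (L k : ℤ))| + |φ (c + (L k : ℤ) + (L k : ℤ))| := by
            rw [abs_mul]
            have := mul_le_mul_of_nonneg_right (htr k) (abs_nonneg (φ (c + (L k : ℤ))))
            linarith
    have hlim : Filter.Tendsto
        (fun k => C * |φ (c + (L k : ℤ))| + |φ (c + (L k : ℤ) + (L k : ℤ))|)
        Filter.atTop (nhds 0) := by
      have h1 : Filter.Tendsto (fun k => |φ (c + (L k : ℤ))|) Filter.atTop (nhds 0) := by
        simpa [Function.comp_def] using ((tendsto_zero_iff_abs_tendsto_zero _).mp (hseq c))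
      have h2 : Filter.Tendsto (fun k => |φ (c + (L k : ℤ) + (L k : ℤ))|)
          Filter.atTop (nhds 0) := by
        simpa [Function.comp_def] using ((tendsto_zero_iff_abs_tendsto_zero _).mp (hseq2 c))
      simpa using (h1.const_mul C).add h2
    have : |φ c| ≤ 0 := ge_of_tendsto' hlim hbound
    have := abs_nonneg (φ c)
    have : |φ c| = 0 := le_antisymm ‹|φ c| ≤ 0› this
    exact abs_eq_zero.mp this
  have hm : φ m = 0 := by
    apply hzero m
    intro k
    have := congrFun (key k) 1
    simpa [solVec, smul_eq_mul] using this
  have hm1 : φ (m + 1) = 0 := by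
    apply hzero (m + 1)
    intro k
    have := congrFun (key k) 0
    simp only [solVec, Pi.sub_apply, Pi.smul_apply, smul_eq_mul] at this
    simpa [solVec, show m + (L k : ℤ) + 1 = m + 1 + (L k : ℤ) by ring,
      show m + (L k : ℤ) + (L k : ℤ) + 1 = m + 1 + (L k : ℤ) + (L k : ℤ) by ring] using this
  -- propagate zero both directions
  have up : ∀ j : ℕ, φ (m + j) = 0 ∧ φ (m + j + 1) = 0 := by
    intro j
    induction j with
    | zero => exact ⟨by simpa using hm, by simpa using hm1⟩
    | succ j ih =>
      have h := hφ (m + j + 1)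
      have e1 : m + (j : ℤ) + 1 - 1 = m + j := by ring
      rw [e1, ih.1, ih.2] at h
      constructor
      · push_cast; rw [show m + ((j : ℤ) + 1) = m + j + 1 by ring]; exact ih.2
      · push_cast; rw [show m + ((j : ℤ) + 1) + 1 = m + j + 1 + 1 by ring]
        linarith
  have down : ∀ j : ℕ, φ (m - j) = 0 ∧ φ (m - j + 1) = 0 := by
    intro j
    induction j with
    | zero => exact ⟨by simpa using hm, by simpa using hm1⟩
    | succ j ih =>
      have h := hφ (m - j)
      rw [ih.1, show m - (j : ℤ) + 1 = m - j + 1 from rfl, ih.2] at h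
      constructor
      · push_cast; rw [show m - ((j : ℤ) + 1) = m - j - 1 by ring]
        linarith
      · push_cast; rw [show m - ((j : ℤ) + 1) + 1 = m - j by ring]; exact ih.1
  funext n
  rcases le_or_gt m n with h | h
  · have := (up (n - m).toNat).1
    rwa [show m + ((n - m).toNat : ℤ) = n by
      rw [Int.toNat_of_nonneg (by linarith)]; ring] at this
  · have := (down (m - n).toNat).1
    rwa [show m - ((m - n).toNat : ℤ) = n by
      rw [Int.toNat_of_nonneg (by linarith)]; ring] at this
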